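/- Let L be a frame, X a set, n a natural number, and R : (Fin n → X) → X → Prop an (n+1)-ary relation on X. Then the convolution operation f_R is completely additive in each coordinate: for every index k : Fin n, every α : Fin n → (X → L), and every family β : J → (X → L), f_R (Function.update α k (⨆_{j∈J} β j)) = ⨆_{j∈J} f_R (Function.update α k (β j)), where suprema of functions X → L are taken pointwise. -/

import Mathlib

/-- The convolution operation of an `(n+1)`-ary relation `R` on `X` over a complete
lattice `L`. -/
def conv {X L : Type*} [CompleteLattice L] {n : ℕ}
    (R : (Fin n → X) → X → Prop) (α : Fin n → X → L) : X → L :=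
  fun x => ⨆ (v : Fin n → X) (_ : R v x), ⨅ k, α k (v k)

lemma iInf_update_aux {L : Type*} [CompleteLattice L] {n : ℕ}
    (f : Fin n → L) (k : Fin n) (a : L) :
    (⨅ i, Function.update f k a i) = a ⊓ ⨅ i : {i // i ≠ k}, f i := by
  apply le_antisymm
  · refine le_inf ?_ (le_iInf fun i => ?_)
    · simpa using iInf_le (Function.update f k a) k
    · have := iInf_le (Function.update f k a) i.1
      rwa [Function.update_of_ne i.2] at this
  · refine le_iInf fun i => ?_
    by_cases h : i = k
    · subst h; simp
    · rw [Function.update_of_ne h]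
      exact inf_le_right.trans (iInf_le (fun i : {i // i ≠ k} => f i) ⟨i, h⟩)

/-- For `L` a frame (the lattice reduct of a complete Heyting algebra), the convolution
operation is completely additive in each coordinate. -/
theorem stmt_1 {X : Type*} {L : Type*} [Order.Frame L] {n : ℕ}
    (R : (Fin n → X) → X → Prop) (k : Fin n) (α : Fin n → X → L)
    {J : Type*} (β : J → X → L) :
    conv R (Function.update α k (⨆ j, β j)) =
      ⨆ j, conv R (Function.update α k (β j)) := by
  funext x
  simp only [conv, iSup_apply]
  rw [iSup_comm]
  refine iSup_congr fun v => ?_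
  rw [iSup_comm]
  refine iSup_congr fun hv => ?_
  have h1 : (⨅ i, Function.update α k (⨆ j, β j) i (v i))
      = ⨅ i, Function.update (fun i => α i (v i)) k ((⨆ j, β j) (v k)) i := by
    refine iInf_congr fun i => ?_
    by_cases h : i = k
    · subst h; simp
    · rw [Function.update_of_ne h, Function.update_of_ne h]
  have h2 : ∀ j, (⨅ i, Function.update α k (β j) i (v i))
      = ⨅ i, Function.update (fun i => α i (v i)) k (β j (v k)) i := by
    intro j
    refine iInf_congr fun i => ?_
    by_cases h : i = k
    · subst h; simp
    · rw [Function.update_of_ne h, Function.update_of_ne h]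
  simp only [h1, h2, iInf_update_aux, iSup_apply, iSup_inf_eq]
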